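/- Let 1 ≤ j ≤ n−2 and suppose PLCP[j] is reducible, i.e. Φ[j] ≥ 1 and S[j−1] = S[Φ[j]−1]. Then PLCP[j] = PLCP[j−1] − 1. -/

import Mathlib

/-- Length of the longest common prefix of two lists. -/
def lcpLen {α : Type*} [DecidableEq α] : List α → List α → ℕ
  | a :: u, b :: v => if a = b then lcpLen u v + 1 else 0
  | _, _ => 0

/-- The suffix of `S` starting at position `i` (as a list). -/
def sfx {α : Type*} {n : ℕ} (S : Fin n → α) (i : ℕ) : List α :=
  (List.ofFn S).drop i
/-- The Φ-array: `Φ[j] = SUF[ISA[j] - 1]` (for `ISA[j] ≥ 1`; junk value otherwise). -/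
def phiOf {n : ℕ} (SUF : Equiv.Perm (Fin n)) (j : Fin n) : Fin n :=
  SUF ⟨(SUF.symm j : ℕ) - 1, lt_of_le_of_lt (Nat.sub_le _ _) (Fin.isLt _)⟩

/-- The permuted LCP-array: `PLCP[j] = lcp(S_j, S_{Φ[j]})`. -/
def plcpOf {α : Type*} [DecidableEq α] {n : ℕ} (S : Fin n → α)
    (SUF : Equiv.Perm (Fin n)) (j : Fin n) : ℕ :=
  lcpLen (sfx S (j : ℕ)) (sfx S ((phiOf SUF j : Fin n) : ℕ))

lemma lex_cons_inv {α : Type*} [LinearOrder α] {a b : α} {u v : List α}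
    (h : List.Lex (· < ·) (a :: u) (b :: v)) : a < b ∨ (a = b ∧ List.Lex (· < ·) u v) := by
  cases h with
  | rel h => exact Or.inl h
  | cons h => exact Or.inr ⟨rfl, h⟩

lemma sfx_cons {α : Type*} {n : ℕ} (S : Fin n → α) (k : ℕ) (hk : k < n) :
    sfx S k = S ⟨k, hk⟩ :: sfx S (k+1) := by
  unfold sfx
  rw [List.drop_eq_getElem_cons (by simpa using hk)]
  simp

lemma sfx_length {α : Type*} {n : ℕ} (S : Fin n → α) (k : ℕ) :
    (sfx S k).length = n - k := by simp [sfx]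

set_option maxHeartbeats 1000000 in
lemma plcp_aux {α : Type*} [LinearOrder α] {n : ℕ} (hn : 3 ≤ n)
    (S : Fin n → α)
    (hsent : ∀ k : Fin n, (k : ℕ) < n - 1 → S ⟨n - 1, Nat.sub_lt (by omega) Nat.one_pos⟩ < S k)
    (SUF : Equiv.Perm (Fin n))
    (hSUF : ∀ i j : Fin n, i < j →
      List.Lex (· < ·) (sfx S ((SUF i : Fin n) : ℕ)) (sfx S ((SUF j : Fin n) : ℕ)))
    (j p : ℕ) (hj1 : 1 ≤ j) (hj2 : j ≤ n - 2) (hjn : j < n)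
    (hpn : p < n) (hp1 : 1 ≤ p)
    (hphi : phiOf SUF ⟨j, hjn⟩ = ⟨p, hpn⟩)
    (hj1n : j - 1 < n) (hp1n : p - 1 < n)
    (hred : S ⟨j - 1, hj1n⟩ = S ⟨p - 1, hp1n⟩) :
    ((plcpOf S SUF ⟨j, hjn⟩ : ℕ) : ℤ) =
      ((plcpOf S SUF ⟨j - 1, hj1n⟩ : ℕ) : ℤ) - 1 := by
  classical
  -- the sentinel suffix is the lexicographically least suffix
  have hlast : sfx S (n-1) = [S ⟨n-1, by omega⟩] := by
    rw [sfx_cons S (n-1) (by omega)]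
    have h0 : sfx S (n-1+1) = [] := by
      have hl := sfx_length S (n-1+1)
      cases h : sfx S (n-1+1) with
      | nil => rfl
      | cons a l => rw [h] at hl; simp at hl; omega
    rw [h0]
  have key0 : ∀ m : ℕ, m < n-1 → ¬ List.Lex (· < ·) (sfx S m) (sfx S (n-1)) := by
    intro m hm h
    rw [sfx_cons S m (by omega), hlast] at h
    rcases lex_cons_inv h with h | ⟨he, h⟩
    · exact absurd (hsent ⟨m, by omega⟩ hm) (asymm h)
    · exact absurd (hsent ⟨m, by omega⟩ hm) (by rw [he]; exact lt_irrefl _)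
  -- converse monotonicity
  have lexlt : ∀ a b : Fin n,
      List.Lex (· < ·) (sfx S ((SUF a : Fin n) : ℕ)) (sfx S ((SUF b : Fin n) : ℕ)) → a < b := by
    intro a b h
    rcases lt_trichotomy a b with h' | h' | h'
    · exact h'
    · subst h'; exact absurd h (fun h => asymm h h)
    · exact absurd (hSUF b a h') (fun h' => asymm h h')
  have mono' : ∀ x y : Fin n,
      List.Lex (· < ·) (sfx S (x : ℕ)) (sfx S (y : ℕ)) → SUF.symm x < SUF.symm y := by
    intro x y h
    refine lexlt _ _ ?_
    rwa [Equiv.apply_symm_apply, Equiv.apply_symm_apply]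
  have sfx_ne : ∀ a b : ℕ, a < n → b < n → a ≠ b → sfx S a ≠ sfx S b := by
    intro a b ha hb hab h
    have := congrArg List.length h
    rw [sfx_length, sfx_length] at this; omega
  -- ISA[m] ≥ 1 for every m < n-1
  have isa_pos : ∀ m : ℕ, (hm : m < n - 1) → 1 ≤ (SUF.symm ⟨m, by omega⟩ : ℕ) := by
    intro m hm
    have h1 : List.Lex (· < ·) (sfx S (n-1)) (sfx S m) := by
      rcases trichotomous_of (List.Lex (· < ·)) (sfx S (n-1)) (sfx S m) with h | h | h
      · exact h
      · exact absurd h.symm (sfx_ne m (n-1) (by omega) (by omega) (by omega))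
      · exact absurd h (key0 m hm)
    have h2 := mono' ⟨n-1, by omega⟩ ⟨m, by omega⟩ h1
    have h3 : (SUF.symm ⟨n-1, by omega⟩ : ℕ) < (SUF.symm ⟨m, by omega⟩ : ℕ) := h2
    omega
  have hi1 : 1 ≤ (SUF.symm ⟨j, hjn⟩ : ℕ) := isa_pos j (by omega)
  have hphi' : SUF ⟨(SUF.symm ⟨j, hjn⟩ : ℕ) - 1,
      lt_of_le_of_lt (Nat.sub_le _ _) (Fin.isLt _)⟩ = ⟨p, hpn⟩ := hphi
  -- S_p <lex S_j
  have hLexpj : List.Lex (· < ·) (sfx S p) (sfx S j) := by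
    have h := hSUF ⟨(SUF.symm ⟨j, hjn⟩ : ℕ) - 1,
        lt_of_le_of_lt (Nat.sub_le _ _) (Fin.isLt _)⟩ (SUF.symm ⟨j, hjn⟩)
      (by rw [Fin.lt_def]; simp; omega)
    rw [Equiv.apply_symm_apply, hphi'] at h
    exact h
  -- common first character
  have hsfxp : sfx S (p-1) = S ⟨p-1, hp1n⟩ :: sfx S p := by
    rw [sfx_cons S (p-1) hp1n, Nat.sub_add_cancel hp1]
  have hsfxj : sfx S (j-1) = S ⟨j-1, hj1n⟩ :: sfx S j := by
    rw [sfx_cons S (j-1) hj1n, Nat.sub_add_cancel hj1]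
  have hLexPred : List.Lex (· < ·) (sfx S (p-1)) (sfx S (j-1)) := by
    rw [hsfxp, hsfxj, hred]
    exact List.Lex.cons hLexpj
  have hab : SUF.symm ⟨p-1, hp1n⟩ < SUF.symm ⟨j-1, hj1n⟩ := mono' _ _ hLexPred
  have hab' : (SUF.symm ⟨p-1, hp1n⟩ : ℕ) < (SUF.symm ⟨j-1, hj1n⟩ : ℕ) := hab
  -- ISA[p-1] = ISA[j-1] - 1
  have hkey : (SUF.symm ⟨p-1, hp1n⟩ : ℕ) = (SUF.symm ⟨j-1, hj1n⟩ : ℕ) - 1 := by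
    by_contra hne
    have halt : (SUF.symm ⟨p-1, hp1n⟩ : ℕ) < (SUF.symm ⟨j-1, hj1n⟩ : ℕ) - 1 := by omega
    have hb1n : (SUF.symm ⟨j-1, hj1n⟩ : ℕ) - 1 < n :=
      lt_of_le_of_lt (Nat.sub_le _ _) (Fin.isLt _)
    have h1 : List.Lex (· < ·) (sfx S (p-1))
        (sfx S ((SUF ⟨(SUF.symm ⟨j-1, hj1n⟩ : ℕ) - 1, hb1n⟩ : Fin n) : ℕ)) := by
      have h := hSUF (SUF.symm ⟨p-1, hp1n⟩) ⟨(SUF.symm ⟨j-1, hj1n⟩ : ℕ) - 1, hb1n⟩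
        (by rw [Fin.lt_def]; simpa using halt)
      rwa [Equiv.apply_symm_apply] at h
    have h2 : List.Lex (· < ·)
        (sfx S ((SUF ⟨(SUF.symm ⟨j-1, hj1n⟩ : ℕ) - 1, hb1n⟩ : Fin n) : ℕ))
        (sfx S (j-1)) := by
      have h := hSUF ⟨(SUF.symm ⟨j-1, hj1n⟩ : ℕ) - 1, hb1n⟩ (SUF.symm ⟨j-1, hj1n⟩)
        (by rw [Fin.lt_def]; simp; omega)
      rwa [Equiv.apply_symm_apply] at h
    set q := ((SUF ⟨(SUF.symm ⟨j-1, hj1n⟩ : ℕ) - 1, hb1n⟩ : Fin n) : ℕ) with hqdef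
    have hqn : q < n := Fin.isLt _
    have hq1 : q < n - 1 := by
      rcases Nat.lt_or_ge q (n-1) with h | h
      · exact h
      · have hqe : q = n - 1 := by omega
        rw [hqe] at h1
        exact absurd h1 (key0 (p-1) (by omega))
    rw [sfx_cons S q (by omega), hsfxp] at h1
    rw [sfx_cons S q (by omega), hsfxj] at h2
    have h3 : List.Lex (· < ·) (sfx S p) (sfx S (q+1)) ∧
        List.Lex (· < ·) (sfx S (q+1)) (sfx S j) := by
      rcases lex_cons_inv h1 with h1' | ⟨he1, h1'⟩ <;>
        rcases lex_cons_inv h2 with h2' | ⟨he2, h2'⟩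
      · have hc := h1'.trans h2'; rw [hred] at hc; exact absurd hc (lt_irrefl _)
      · rw [he2, hred] at h1'; exact absurd h1' (lt_irrefl _)
      · rw [← he1, hred] at h2'; exact absurd h2' (lt_irrefl _)
      · exact ⟨h1', h2'⟩
    have hq1n : q + 1 < n := by omega
    -- suffixes p and q+1 agree modulo Fin coercions
    have hsp : sfx S p = sfx S ((⟨p, hpn⟩ : Fin n) : ℕ) := rfl
    have hsj : sfx S j = sfx S ((⟨j, hjn⟩ : Fin n) : ℕ) := rfl
    have e1 : SUF.symm ⟨p, hpn⟩ < SUF.symm ⟨q+1, hq1n⟩ := mono' _ _ h3.1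
    have e2 : SUF.symm ⟨q+1, hq1n⟩ < SUF.symm ⟨j, hjn⟩ := mono' _ _ h3.2
    have ep : SUF.symm ⟨p, hpn⟩ = ⟨(SUF.symm ⟨j, hjn⟩ : ℕ) - 1,
        lt_of_le_of_lt (Nat.sub_le _ _) (Fin.isLt _)⟩ := by
      rw [← hphi', Equiv.symm_apply_apply]
    rw [ep] at e1
    have e1' : (SUF.symm ⟨j, hjn⟩ : ℕ) - 1 < (SUF.symm ⟨q+1, hq1n⟩ : ℕ) := e1
    have e2' : (SUF.symm ⟨q+1, hq1n⟩ : ℕ) < (SUF.symm ⟨j, hjn⟩ : ℕ) := e2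
    omega
  -- Φ[j-1] = p-1
  have hphi_pred : phiOf SUF ⟨j-1, hj1n⟩ = ⟨p-1, hp1n⟩ := by
    unfold phiOf
    rw [show (⟨(SUF.symm ⟨j-1, hj1n⟩ : ℕ) - 1,
        lt_of_le_of_lt (Nat.sub_le _ _) (Fin.isLt _)⟩ : Fin n)
        = SUF.symm ⟨p-1, hp1n⟩ from Fin.ext hkey.symm]
    rw [Equiv.apply_symm_apply]
  -- conclude
  have hplcp_j : plcpOf S SUF ⟨j, hjn⟩ = lcpLen (sfx S j) (sfx S p) := by
    unfold plcpOf
    rw [hphi]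
  have hplcp_j1 : plcpOf S SUF ⟨j-1, hj1n⟩ = lcpLen (sfx S j) (sfx S p) + 1 := by
    unfold plcpOf
    rw [hphi_pred]
    show lcpLen (sfx S (j-1)) (sfx S (p-1)) = _
    rw [hsfxp, hsfxj, hred, lcpLen]
    simp
  rw [hplcp_j, hplcp_j1]
  push_cast
  ring

/-- If `1 ≤ j ≤ n-2` and `PLCP[j]` is reducible (`Φ[j] ≥ 1` and `S[j-1] = S[Φ[j]-1]`),
then `PLCP[j] = PLCP[j-1] - 1`. -/
theorem plcp_eq_pred_sub_one_of_reducible {α : Type*} [LinearOrder α] {n : ℕ} (hn : 3 ≤ n)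
    (S : Fin n → α)
    (hsent : ∀ k : Fin n, (k : ℕ) < n - 1 → S ⟨n - 1, by omega⟩ < S k)
    (SUF : Equiv.Perm (Fin n))
    (hSUF : ∀ i j : Fin n, i < j →
      List.Lex (· < ·) (sfx S ((SUF i : Fin n) : ℕ)) (sfx S ((SUF j : Fin n) : ℕ)))
    (j : ℕ) (hj1 : 1 ≤ j) (hj2 : j ≤ n - 2)
    (hphi1 : 1 ≤ ((phiOf SUF ⟨j, by omega⟩ : Fin n) : ℕ))
    (hred : S ⟨j - 1, by omega⟩ =
      S ⟨((phiOf SUF ⟨j, by omega⟩ : Fin n) : ℕ) - 1,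
         lt_of_le_of_lt (Nat.sub_le _ _) (Fin.isLt _)⟩) :
    ((plcpOf S SUF ⟨j, by omega⟩ : ℕ) : ℤ) =
      ((plcpOf S SUF ⟨j - 1, by omega⟩ : ℕ) : ℤ) - 1 := by
  exact plcp_aux hn S hsent SUF hSUF j ((phiOf SUF ⟨j, by omega⟩ : Fin n) : ℕ)
    hj1 hj2 (by omega) (Fin.isLt _) hphi1 (Fin.ext rfl) (by omega)
    (lt_of_le_of_lt (Nat.sub_le _ _) (Fin.isLt _)) hred
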